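/- Let R be a divided commutative ring. Then a proper ideal I of R is a 1-absorbing primary ideal if and only if I is a primary ideal. -/

import Mathlib

def IsOneAbsorbingPrimary {R : Type*} [CommRing R] (I : Ideal R) : Prop :=
  I ≠ ⊤ ∧ ∀ a b c : R, ¬IsUnit a → ¬IsUnit b → ¬IsUnit c →
    a * b * c ∈ I → a * b ∈ I ∨ c ∈ I.radical

theorem oneAbsorbingPrimary_iff_primary_of_divided {R : Type*} [CommRing R] [Nontrivial R]
    (hdiv : ∀ P : Ideal R, P.IsPrime → ∀ x ∉ P, ∀ p ∈ P, x ∣ p)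
    (I : Ideal R) (hI : I ≠ ⊤) :
    IsOneAbsorbingPrimary I ↔ I.IsPrimary := by
  rw [Ideal.isPrimary_iff]
  constructor
  · rintro ⟨-, h⟩
    refine ⟨hI, fun {x y} hxy => ?_⟩
    by_cases hy : IsUnit y
    · left
      obtain ⟨u, rfl⟩ := hy
      have := I.mul_mem_right (↑u⁻¹ : R) hxy
      simpa [mul_assoc] using this
    by_cases hx : IsUnit x
    · right
      obtain ⟨u, rfl⟩ := hx
      have : y ∈ I := by
        have := I.mul_mem_left (↑u⁻¹ : R) hxy
        simpa [← mul_assoc] using this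
      exact Ideal.le_radical this
    by_contra hcon
    push_neg at hcon
    obtain ⟨hxI, hyr⟩ := hcon
    -- find a prime P ⊇ I with y ∉ P
    rw [Ideal.radical_eq_sInf] at hyr
    simp only [Ideal.mem_sInf, not_forall] at hyr
    obtain ⟨P, ⟨hIP, hPprime⟩, hyP⟩ := hyr
    have hxP : x ∈ P := by
      rcases hPprime.mem_or_mem (hIP hxy) with h | h
      · exact h
      · exact absurd h hyP
    obtain ⟨t, ht⟩ := hdiv P hPprime y hyP x hxP
    have htnu : ¬IsUnit t := by
      intro htu
      obtain ⟨u, rfl⟩ := htu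
      apply hyP
      have : y = x * ↑u⁻¹ := by
        rw [ht]; simp [mul_assoc]
      rw [this]
      exact P.mul_mem_right _ hxP
    have hmem : t * y * y ∈ I := by
      have : t * y * y = x * y := by rw [ht]; ring
      rw [this]; exact hxy
    rcases h t y y htnu hy hy hmem with h1 | h2
    · apply hxI
      rw [ht, mul_comm]
      exact h1
    · apply absurd h2
      rw [Ideal.radical_eq_sInf]
      simp only [Ideal.mem_sInf, not_forall]
      exact ⟨P, ⟨hIP, hPprime⟩, hyP⟩
  · rintro ⟨-, h⟩
    refine ⟨hI, fun a b c _ _ _ habc => h habc⟩
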